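/- If every induced path between non-adjacent vertices u and v of G passes through a vertex of I_{u,v} = N(u) ∩ N(v), and all such paths have length 2, then in the complement graph, adding uv to G corresponds to deleting the edge uv from the complement, and the complement of G + uv has no induced cycle of length 5 or more passing through the non-edge uv if the complement of G is C5-, C6-, …-free. -/

import Mathlib

open SimpleGraph

/-- `G` has an induced (chordless) cycle of length `n`. -/
def HasInducedCycle {V : Type*} (G : SimpleGraph V) (n : ℕ) : Prop :=
  Nonempty (SimpleGraph.cycleGraph n ↪g G)

/-- `G` is chordal: it has no induced cycle of length 4 or more. -/
def Chordal {V : Type*} (G : SimpleGraph V) : Prop :=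
  ∀ n, 4 ≤ n → ¬ HasInducedCycle G n

/-- `G` is weakly chordal: neither `G` nor its complement has an induced cycle
of length 5 or more. -/
def WeaklyChordal {V : Type*} (G : SimpleGraph V) : Prop :=
  (∀ n, 5 ≤ n → ¬ HasInducedCycle G n) ∧ (∀ n, 5 ≤ n → ¬ HasInducedCycle Gᶜ n)

/-- `G` has an induced (chordless) path of length `ℓ` (i.e. with `ℓ` edges)
from `u` to `v`. -/
def HasInducedPath {V : Type*} (G : SimpleGraph V) (u v : V) (ℓ : ℕ) : Prop :=
  ∃ f : SimpleGraph.pathGraph (ℓ + 1) ↪g G, f 0 = u ∧ f (Fin.last ℓ) = v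

lemma cyc_adj_iff {n : ℕ} (hn : 2 ≤ n) (a b : Fin n) :
    (cycleGraph n).Adj a b ↔
      a.val + 1 = b.val ∨ b.val + 1 = a.val ∨ (a.val = 0 ∧ b.val = n - 1) ∨
        (b.val = 0 ∧ a.val = n - 1) := by
  have key : ∀ x y : Fin n, (x - y).val = 1 ↔
      (y.val + 1 = x.val ∨ (y.val = n - 1 ∧ x.val = 0)) := by
    intro x y
    rw [Fin.sub_def]
    have hx := x.is_lt
    have hy := y.is_lt
    dsimp only
    rcases Nat.lt_or_ge ((n - y.val) + x.val) n with h' | h'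
    · rw [Nat.mod_eq_of_lt h']; omega
    · rw [Nat.mod_eq_sub_mod h', Nat.mod_eq_of_lt (by omega)]; omega
  rw [cycleGraph_adj', key, key]
  omega

lemma arc_cycle {V : Type*} {G : SimpleGraph V} {u v : V} (hne : u ≠ v) (huv : ¬G.Adj u v)
    {n : ℕ} [NeZero n] (hn : 5 ≤ n) (f : cycleGraph n ↪g (G ⊔ edge u v)ᶜ) {k : Fin n}
    (hfu : f 0 = u) (hfv : f k = v) (hk2 : 2 ≤ k.val) (hkn : k.val + 2 ≤ n) :
    HasInducedCycle Gᶜ (k.val + 1) := by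
  have h0 : (0 : Fin n).val = 0 := rfl
  have hF1 : ∀ i j : Fin n, (cycleGraph n).Adj i j → Gᶜ.Adj (f i) (f j) := by
    intro i j h
    have h2 := f.map_rel_iff.mpr h
    rw [compl_adj] at h2 ⊢
    exact ⟨h2.1, fun hG => h2.2 (Or.inl hG)⟩
  have hF2 : ∀ i j : Fin n, i ≠ j → ¬(cycleGraph n).Adj i j →
      ¬(i = 0 ∧ j = k) → ¬(j = 0 ∧ i = k) → G.Adj (f i) (f j) := by
    intro i j hij hnadj hp1 hp2
    have hfij : f i ≠ f j := fun h => hij (f.injective h)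
    have h2 : ¬((G ⊔ edge u v)ᶜ).Adj (f i) (f j) := fun h => hnadj (f.map_rel_iff.mp h)
    rw [compl_adj] at h2
    push_neg at h2
    rcases h2 hfij with hG | hE
    · exact hG
    · exfalso
      rw [edge_adj] at hE
      rcases hE.1 with ⟨h1, h2'⟩ | ⟨h1, h2'⟩
      · exact hp1 ⟨f.injective (by rw [h1, hfu]), f.injective (by rw [h2', hfv])⟩
      · exact hp2 ⟨f.injective (by rw [h2', hfu]), f.injective (by rw [h1, hfv])⟩
  set m := k.val + 1 with hm
  have hmn : m ≤ n := by omega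
  refine ⟨⟨⟨fun a => f (Fin.castLE hmn a), f.injective.comp (Fin.castLE_injective hmn)⟩, ?_⟩⟩
  intro a b
  dsimp only [Function.Embedding.coeFn_mk]
  have hav := a.is_lt
  have hbv := b.is_lt
  have hca : (Fin.castLE hmn a).val = a.val := rfl
  have hcb : (Fin.castLE hmn b).val = b.val := rfl
  rw [cyc_adj_iff (by omega)]
  constructor
  · rintro hadj
    rw [compl_adj] at hadj
    have hab : a ≠ b := by
      intro h; exact hadj.1 (by rw [h])
    by_contra hc
    push_neg at hc
    have hnadj : ¬(cycleGraph n).Adj (Fin.castLE hmn a) (Fin.castLE hmn b) := by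
      rw [cyc_adj_iff (by omega), hca, hcb]
      omega
    have := hF2 _ _ (fun h => hab (Fin.castLE_injective hmn h)) hnadj
      (fun ⟨h1, h2⟩ => by
        have e1 : a.val = 0 := by rw [← hca, h1]; rfl
        have e2 : b.val = k.val := by rw [← hcb, h2]
        omega)
      (fun ⟨h1, h2⟩ => by
        have e1 : b.val = 0 := by rw [← hcb, h1]; rfl
        have e2 : a.val = k.val := by rw [← hca, h2]
        omega)
    exact hadj.2 this
  · rintro (h | h | h | h)
    · exact hF1 _ _ (by rw [cyc_adj_iff (by omega), hca, hcb]; omega)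
    · exact hF1 _ _ (by rw [cyc_adj_iff (by omega), hca, hcb]; omega)
    · have e1 : Fin.castLE hmn a = 0 := by
        apply Fin.ext; rw [hca, h.1]; rfl
      have e2 : Fin.castLE hmn b = k := by
        apply Fin.ext; rw [hcb, h.2]; omega
      rw [e1, e2, hfu, hfv, compl_adj]
      exact ⟨hne, huv⟩
    · have e1 : Fin.castLE hmn b = 0 := by
        apply Fin.ext; rw [hcb, h.1]; rfl
      have e2 : Fin.castLE hmn a = k := by
        apply Fin.ext; rw [hca, h.2]; omega
      rw [e1, e2, hfu, hfv, compl_adj]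
      exact ⟨hne.symm, fun h => huv h.symm⟩

/-- If `{u,v}` is a two-pair of `G` (every induced `u`–`v` path has length
exactly 2) and the complement of `G` has no induced cycle of length 5 or more,
then the complement of `G + uv` has no induced cycle of length 5 or more. -/
theorem compl_add_edge_no_long_cycle {V : Type*} (G : SimpleGraph V) (u v : V)
    (hne : u ≠ v) (huv : ¬ G.Adj u v)
    (htp : ∀ ℓ, HasInducedPath G u v ℓ → ℓ = 2)
    (hc : ∀ n, 5 ≤ n → ¬ HasInducedCycle Gᶜ n) :
    ∀ n, 5 ≤ n → ¬ HasInducedCycle (G ⊔ SimpleGraph.edge u v)ᶜ n := by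
  intro n hn hcyc
  obtain ⟨m, rfl⟩ : ∃ m, n = m + 5 := ⟨n - 5, by omega⟩
  obtain ⟨f⟩ := hcyc
  -- Case A: u or v is not on the cycle
  by_cases hu : ∃ i, f i = u
  case neg =>
    push_neg at hu
    refine hc (m + 5) hn ⟨⟨⟨f, f.injective⟩, ?_⟩⟩
    intro a b
    rw [← f.map_rel_iff]
    dsimp only [Function.Embedding.coeFn_mk]
    have hE : ¬ (edge u v).Adj (f a) (f b) := by
      rw [edge_adj]
      rintro ⟨⟨h1, h2⟩ | ⟨h1, h2⟩, hne'⟩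
      · exact hu a h1
      · exact hu b h2
    simp only [compl_adj, sup_adj]
    tauto
  by_cases hv : ∃ j, f j = v
  case neg =>
    push_neg at hv
    refine hc (m + 5) hn ⟨⟨⟨f, f.injective⟩, ?_⟩⟩
    intro a b
    rw [← f.map_rel_iff]
    dsimp only [Function.Embedding.coeFn_mk]
    have hE : ¬ (edge u v).Adj (f a) (f b) := by
      rw [edge_adj]
      rintro ⟨⟨h1, h2⟩ | ⟨h1, h2⟩, hne'⟩
      · exact hv b h2
      · exact hv a h1
    simp only [compl_adj, sup_adj]
    tauto
  -- Case B: both u and v on the cycle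
  obtain ⟨i0, hi0⟩ := hu
  obtain ⟨j0, hj0⟩ := hv
  -- rotate the cycle so that u is at position 0
  let f1 : cycleGraph (m + 5) ↪g (G ⊔ edge u v)ᶜ :=
    ⟨⟨fun i => f (i + i0), f.injective.comp (add_left_injective i0)⟩, by
      intro a b
      dsimp only [Function.Embedding.coeFn_mk]
      rw [f.map_rel_iff]
      simp only [cycleGraph_adj', add_sub_add_right_eq_sub]⟩
  have hfu1 : f1 0 = u := by
    show f (0 + i0) = u
    rw [zero_add]
    exact hi0
  obtain ⟨k, hfv1⟩ : ∃ k, f1 k = v := by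
    refine ⟨j0 - i0, ?_⟩
    show f (j0 - i0 + i0) = v
    rw [sub_add_cancel]
    exact hj0
  have hk0 : k ≠ 0 := by
    intro h
    rw [h] at hfv1
    exact hne (hfu1.symm.trans hfv1)
  have h00 : (0 : Fin (m + 5)).val = 0 := rfl
  have hk0' : k.val ≠ 0 := fun h => hk0 (Fin.ext (h.trans h00.symm))
  by_cases hadj : (cycleGraph (m + 5)).Adj 0 k
  case pos =>
    have h2 := f1.map_rel_iff.mpr hadj
    rw [hfu1, hfv1, compl_adj] at h2
    exact h2.2 (Or.inr ((edge_adj u v u v).mpr ⟨Or.inl ⟨rfl, rfl⟩, hne⟩))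
  have hklt := k.is_lt
  have hkb : 2 ≤ k.val ∧ k.val + 2 ≤ m + 5 := by
    rw [cyc_adj_iff (by omega)] at hadj
    rw [h00] at hadj
    push_neg at hadj
    omega
  -- first arc
  have harc1 := arc_cycle hne huv hn f1 hfu1 hfv1 hkb.1 hkb.2
  have hk3 : k.val ≤ 3 := by
    by_contra h
    exact hc (k.val + 1) (by omega) harc1
  -- second arc, reflected cycle
  let f2 : cycleGraph (m + 5) ↪g (G ⊔ edge u v)ᶜ :=
    ⟨⟨fun i => f1 (-i), f1.injective.comp neg_injective⟩, by
      intro a b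
      dsimp only [Function.Embedding.coeFn_mk]
      rw [f1.map_rel_iff]
      simp only [cycleGraph_adj', neg_sub_neg]
      tauto⟩
  have hfu2 : f2 0 = u := by
    show f1 (-0) = u
    rw [neg_zero]
    exact hfu1
  have hfv2 : f2 (-k) = v := by
    show f1 (-(-k)) = v
    rw [neg_neg]
    exact hfv1
  have hnk : (-k).val = m + 5 - k.val := by
    rw [Fin.neg_def]
    exact Nat.mod_eq_of_lt (by omega)
  have harc2 := arc_cycle hne huv hn f2 hfu2 hfv2 (by omega) (by omega)
  have hk3' : m + 5 - k.val ≤ 3 := by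
    by_contra h
    rw [hnk] at harc2
    exact hc (m + 5 - k.val + 1) (by omega) harc2
  -- facts about nonedges and edges of G along the cycle
  have hA : ∀ i j : Fin (m + 5), (cycleGraph (m + 5)).Adj i j → ¬ G.Adj (f1 i) (f1 j) := by
    intro i j h
    have h2 := f1.map_rel_iff.mpr h
    rw [compl_adj] at h2
    exact fun hG => h2.2 (Or.inl hG)
  have hN : ∀ i j : Fin (m + 5), i ≠ j → ¬(cycleGraph (m + 5)).Adj i j →
      ¬(i = 0 ∧ j = k) → ¬(j = 0 ∧ i = k) → G.Adj (f1 i) (f1 j) := by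
    intro i j hij hnadj hp1 hp2
    have hfij : f1 i ≠ f1 j := fun h => hij (f1.injective h)
    have h2 : ¬((G ⊔ edge u v)ᶜ).Adj (f1 i) (f1 j) := fun h => hnadj (f1.map_rel_iff.mp h)
    rw [compl_adj] at h2
    push_neg at h2
    rcases h2 hfij with hG | hE
    · exact hG
    · exfalso
      rw [edge_adj] at hE
      rcases hE.1 with ⟨h1, h2'⟩ | ⟨h1, h2'⟩
      · exact hp1 ⟨f1.injective (by rw [h1, hfu1]), f1.injective (by rw [h2', hfv1])⟩
      · exact hp2 ⟨f1.injective (by rw [h2', hfu1]), f1.injective (by rw [h1, hfv1])⟩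
  clear hadj harc1 harc2 hfu2 hfv2 hnk hi0 hj0
  have hn56 : m = 0 ∨ m = 1 := by omega
  rcases hn56 with rfl | rfl
  · -- n = 5 : k.val = 2 or 3
    have hvv2 : ((2 : Fin (0+5))).val = 2 := rfl
    have hvv3 : ((3 : Fin (0+5))).val = 3 := rfl
    have hk23 : k = (2 : Fin (0+5)) ∨ k = (3 : Fin (0+5)) := by
      rcases Nat.lt_or_ge k.val 3 with h | h
      · exact Or.inl (Fin.ext (by omega))
      · exact Or.inr (Fin.ext (by omega))
    rcases hk23 with hk2 | hk2 <;> subst hk2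
    · -- path f1 0 - f1 3 - f1 1 - f1 4 - f1 2 of length 4
      refine absurd (htp 4 ⟨⟨⟨fun i => f1 (![0, 3, 1, 4, 2] i),
        f1.injective.comp (by decide)⟩, ?_⟩, ?_, ?_⟩) (by norm_num)
      · intro a b
        dsimp only [Function.Embedding.coeFn_mk]
        fin_cases a <;> fin_cases b <;>
          simp only [pathGraph_adj] <;> norm_num <;>
          first
            | exact hN _ _ (by decide) (by decide) (by decide) (by decide)
            | exact hA _ _ (by decide)
            | (rw [hfu1, hfv1]; exact huv)
            | (rw [hfu1, hfv1]; exact fun h => huv h.symm)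
      · exact hfu1
      · show f1 (![0, 3, 1, 4, 2] (Fin.last 4)) = v
        rw [show (![0, 3, 1, 4, 2] (Fin.last 4) : Fin (0+5)) = 2 by decide]
        exact hfv1
    · -- path f1 0 - f1 2 - f1 4 - f1 1 - f1 3 of length 4
      refine absurd (htp 4 ⟨⟨⟨fun i => f1 (![0, 2, 4, 1, 3] i),
        f1.injective.comp (by decide)⟩, ?_⟩, ?_, ?_⟩) (by norm_num)
      · intro a b
        dsimp only [Function.Embedding.coeFn_mk]
        fin_cases a <;> fin_cases b <;>
          simp only [pathGraph_adj] <;> norm_num <;>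
          first
            | exact hN _ _ (by decide) (by decide) (by decide) (by decide)
            | exact hA _ _ (by decide)
            | (rw [hfu1, hfv1]; exact huv)
            | (rw [hfu1, hfv1]; exact fun h => huv h.symm)
      · exact hfu1
      · show f1 (![0, 2, 4, 1, 3] (Fin.last 4)) = v
        rw [show (![0, 2, 4, 1, 3] (Fin.last 4) : Fin (0+5)) = 3 by decide]
        exact hfv1
  · -- n = 6 : k.val = 3
    have hvv3 : ((3 : Fin (1+5))).val = 3 := rfl
    have hk2 : k = (3 : Fin (1+5)) := Fin.ext (by omega)
    subst hk2
    -- path f1 0 - f1 2 - f1 5 - f1 3 of length 3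
    refine absurd (htp 3 ⟨⟨⟨fun i => f1 (![0, 2, 5, 3] i),
      f1.injective.comp (by decide)⟩, ?_⟩, ?_, ?_⟩) (by norm_num)
    · intro a b
      dsimp only [Function.Embedding.coeFn_mk]
      fin_cases a <;> fin_cases b <;>
        simp only [pathGraph_adj] <;> norm_num <;>
        first
          | exact hN _ _ (by decide) (by decide) (by decide) (by decide)
          | exact hA _ _ (by decide)
          | (rw [hfu1, hfv1]; exact huv)
          | (rw [hfu1, hfv1]; exact fun h => huv h.symm)
    · exact hfu1
    · show f1 (![0, 2, 5, 3] (Fin.last 3)) = v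
      rw [show (![0, 2, 5, 3] (Fin.last 3) : Fin (1+5)) = 3 by decide]
      exact hfv1
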